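/- arXiv:2205.15908 — 2 statements merged into one kernel-verified Lean document; each statement's English description precedes it below -/
import Mathlib

section
/- Fix a resolution level R ≥ 1, an integer h with 1 ≤ h ≤ 2^{R−1}, and g ∈ ℕ. Then for every x in the open interval ((h−1)/2^{R−1}, h/2^{R−1}), the derivative of the Legendre wavelet ψ_{h,g} satisfies ψ_{h,g}′(x) = 2^R · Σ_{j=0, j+g odd}^{g−1} √((2g+1)(2j+1)) · ψ_{h,j}(x), where the sum runs over those j ∈ {0, 1, …, g−1} for which j + g is odd. -/
/-- The Legendre polynomial of degree `g` on `[−1,1]`, via the Rodrigues formula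
`P_g(y) = (1/(2^g g!)) (d/dy)^g [(y² − 1)^g]`. -/
noncomputable def legendreP (g : ℕ) (y : ℝ) : ℝ :=
  (1 / ((2 : ℝ) ^ g * (g.factorial : ℝ))) * iteratedDeriv g (fun z : ℝ => (z ^ 2 - 1) ^ g) y

/-- The Legendre wavelet `ψ_{h,g}` at resolution level `R`. -/
noncomputable def legendreWavelet (R h g : ℕ) (x : ℝ) : ℝ :=
  if ((h : ℝ) - 1) / 2 ^ (R - 1) ≤ x ∧ x ≤ (h : ℝ) / 2 ^ (R - 1) then
    (2 : ℝ) ^ ((R : ℝ) / 2) * Real.sqrt ((g : ℝ) + 1 / 2) *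
      legendreP g (2 ^ R * x - 2 * (h : ℝ) + 1)
  else 0

open Polynomial

theorem iterAdd (n : ℕ) (p q : Polynomial ℝ) :
    derivative^[n] (p + q) = derivative^[n] p + derivative^[n] q := by
  induction n generalizing p q with
  | zero => simp
  | succ n ih => simp [Function.iterate_succ_apply, ih]

theorem leibnizX (m : ℕ) (p : Polynomial ℝ) :
    derivative^[m+1] (X * p) = X * derivative^[m+1] p + C ((m:ℝ)+1) * derivative^[m] p := by
  induction m generalizing p with
  | zero => simp [derivative_mul]; ring
  | succ n ih =>
    have h1 : derivative^[n+2] (X * p) = derivative^[n+1] (p + X * derivative p) := by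
      rw [Function.iterate_succ_apply, derivative_mul, derivative_X, one_mul]
    rw [h1, iterAdd, ih (derivative p)]
    rw [show derivative^[n+1] (derivative p) = derivative^[n+2] p from
      (Function.iterate_succ_apply derivative (n+1) p).symm]
    rw [show derivative^[n] (derivative p) = derivative^[n+1] p from
      (Function.iterate_succ_apply derivative n p).symm]
    simp only [Nat.cast_add, Nat.cast_one, map_add, map_one]
    ring

theorem derivA (n : ℕ) :
    derivative ((X^2 - 1 : Polynomial ℝ)^(n+1)) = C (2*((n:ℝ)+1)) * (X * (X^2-1)^n) := by
  rw [derivative_pow]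
  simp only [derivative_sub, derivative_one, derivative_X_pow]
  push_cast
  simp only [map_mul, map_add, map_one, map_ofNat]
  ring

theorem recA (n : ℕ) :
    derivative^[n+2] ((X^2 - 1 : Polynomial ℝ)^(n+1)) =
      C (2*((n:ℝ)+1)) * (X * derivative^[n+1] ((X^2-1)^n)
        + C ((n:ℝ)+1) * derivative^[n] ((X^2-1)^n)) := by
  rw [show n+2 = (n+1)+1 from rfl, Function.iterate_succ_apply, derivA,
    iterate_derivative_C_mul, leibnizX n]

theorem recB (m : ℕ) :
    X * derivative^[m+2] ((X^2 - 1 : Polynomial ℝ)^(m+1)) =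
      C ((m:ℝ)+1) * derivative^[m+1] ((X^2-1)^(m+1))
        + C (2*((m:ℝ)+1)) * derivative^[m+1] ((X^2-1)^m) := by
  have key : X * derivative ((X^2 - 1 : Polynomial ℝ)^(m+1)) =
      C (2*((m:ℝ)+1)) * ((X^2-1)^(m+1) + (X^2-1)^m) := by
    rw [derivA]; ring
  have h2 := congrArg (derivative^[m+1]) key
  rw [leibnizX m, iterate_derivative_C_mul, iterAdd] at h2
  rw [show derivative^[m+1] (derivative ((X^2-1 : Polynomial ℝ)^(m+1)))
      = derivative^[m+2] ((X^2-1)^(m+1)) from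
    (Function.iterate_succ_apply derivative (m+1) _).symm] at h2
  rw [show derivative^[m] (derivative ((X^2-1 : Polynomial ℝ)^(m+1)))
      = derivative^[m+1] ((X^2-1)^(m+1)) from
    (Function.iterate_succ_apply derivative m _).symm] at h2
  simp only [map_mul, map_add, map_one, map_ofNat] at h2 ⊢
  linear_combination h2

/-- The Legendre polynomial as a polynomial. -/
noncomputable def legP (g : ℕ) : Polynomial ℝ :=
  C (1 / ((2:ℝ)^g * g.factorial)) * (derivative^[g] ((X^2 - 1)^g))

theorem cfact (k : ℕ) :
    (1 / ((2:ℝ)^(k+1) * (k+1).factorial)) * (2*((k:ℝ)+1)) = 1 / ((2:ℝ)^k * k.factorial) := by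
  rw [Nat.factorial_succ]
  push_cast
  have h1 : ((2:ℝ))^k ≠ 0 := by positivity
  have h2 : (k.factorial : ℝ) ≠ 0 := by positivity
  field_simp
  ring

theorem legP_zero : legP 0 = 1 := by simp [legP]

theorem legP_one : legP 1 = X := by
  simp only [legP, Function.iterate_one]
  simp [derivative_sub, derivative_one]
  rw [← C_1, ← C_add, ← mul_assoc, ← C_mul]
  norm_num

theorem legP_rec (m : ℕ) :
    derivative (legP (m+2)) = derivative (legP m) + C (2*(m:ℝ)+3) * legP (m+1) := by
  have hA := recA (m+1)
  have hB := recB m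
  have hd : derivative (legP (m+2))
      = C (1 / ((2:ℝ)^(m+2) * (m+2).factorial)) * derivative^[m+3] ((X^2-1)^(m+2)) := by
    rw [legP, derivative_C_mul, ← Function.iterate_succ_apply' derivative (m+2)]
  have hdm : derivative (legP m)
      = C (1 / ((2:ℝ)^m * m.factorial)) * derivative^[m+1] ((X^2-1)^m) := by
    rw [legP, derivative_C_mul, ← Function.iterate_succ_apply' derivative m]
  have e1 : C (1 / ((2:ℝ)^(m+2) * (m+2).factorial)) * C (2*((m:ℝ)+2))
      = C (1 / ((2:ℝ)^(m+1) * (m+1).factorial)) := by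
    rw [← map_mul]
    congr 1
    have := cfact (m+1)
    push_cast at this ⊢
    linarith [this]
  have e2 : C (1 / ((2:ℝ)^(m+1) * (m+1).factorial)) * C (2*((m:ℝ)+1))
      = C (1 / ((2:ℝ)^m * m.factorial)) := by
    rw [← map_mul]
    congr 1
    exact cfact m
  rw [hd, hA, hB, hdm, legP]
  set A := derivative^[m+1] ((X^2-1 : Polynomial ℝ)^(m+1)) with hAdef
  set B := derivative^[m+1] ((X^2-1 : Polynomial ℝ)^m) with hBdef
  push_cast
  simp only [map_mul, map_add, map_one, map_ofNat] at e1 e2 ⊢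
  linear_combination ((2*C ((m:ℝ))+3)*A + 2*(C ((m:ℝ))+1)*B) * e1 + B * e2

theorem legP_deriv_sum (g : ℕ) :
    derivative (legP g) = ∑ j ∈ (Finset.range g).filter (fun j => Odd (j+g)),
      C ((2*j+1 : ℕ) : ℝ) * legP j := by
  induction g using Nat.twoStepInduction with
  | zero => simp [legP_zero]
  | one =>
    rw [show (Finset.range 1).filter (fun j => Odd (j+1)) = {0} by decide]
    simp [legP_zero, legP_one]
  | more n ih _ =>
    have hset : (Finset.range (n+2)).filter (fun j => Odd (j+(n+2)))
        = insert (n+1) ((Finset.range n).filter (fun j => Odd (j+n))) := by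
      ext j
      simp only [Finset.mem_filter, Finset.mem_insert, Finset.mem_range, Nat.odd_iff]
      omega
    rw [legP_rec, ih, hset, Finset.sum_insert (by simp)]
    have : (C ((2*(n+1)+1 : ℕ) : ℝ)) = C (2*(n:ℝ)+3) := by push_cast; ring_nf
    rw [this]
    ring

theorem iterEval (p : Polynomial ℝ) (n : ℕ) :
    iteratedDeriv n (fun x => p.eval x) = fun x => (derivative^[n] p).eval x := by
  induction n with
  | zero => simp
  | succ n ih =>
    rw [iteratedDeriv_succ, ih, Function.iterate_succ_apply']
    funext x
    exact Polynomial.deriv _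

theorem legendreP_eq (g : ℕ) (y : ℝ) : legendreP g y = (legP g).eval y := by
  rw [legendreP, legP, eval_mul, eval_C]
  congr 1
  rw [show (fun z : ℝ => (z ^ 2 - 1) ^ g) = fun z : ℝ => ((X^2-1 : Polynomial ℝ)^g).eval z by
    funext z; simp]
  rw [iterEval]

/-- On the interior of its support interval, the derivative of the Legendre wavelet satisfies
`ψ_{h,g}′(x) = 2^R Σ_{j < g, j+g odd} √((2g+1)(2j+1)) ψ_{h,j}(x)`. -/
theorem legendreWavelet_deriv (R h g : ℕ) (hR : 1 ≤ R) (hh₁ : 1 ≤ h) (hh₂ : h ≤ 2 ^ (R - 1))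
    (x : ℝ) (hx₁ : ((h : ℝ) - 1) / 2 ^ (R - 1) < x) (hx₂ : x < (h : ℝ) / 2 ^ (R - 1)) :
    deriv (legendreWavelet R h g) x =
      2 ^ R * ∑ j ∈ (Finset.range g).filter (fun j => Odd (j + g)),
        Real.sqrt (((2 * g + 1 : ℕ) : ℝ) * ((2 * j + 1 : ℕ) : ℝ)) * legendreWavelet R h j x := by
  set y : ℝ := 2 ^ R * x - 2 * (h : ℝ) + 1 with hy
  set c : ℕ → ℝ := fun j => (2 : ℝ) ^ ((R : ℝ) / 2) * Real.sqrt ((j : ℝ) + 1 / 2) with hc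
  -- the wavelet agrees with a smooth function near x
  have hev : legendreWavelet R h g =ᶠ[nhds x]
      (fun z => c g * (legP g).eval (2 ^ R * z - 2 * (h : ℝ) + 1)) := by
    filter_upwards [Ioo_mem_nhds hx₁ hx₂] with z hz
    rw [legendreWavelet, if_pos ⟨le_of_lt hz.1, le_of_lt hz.2⟩, legendreP_eq]
  have hinner : HasDerivAt (fun z : ℝ => 2 ^ R * z - 2 * (h : ℝ) + 1) ((2:ℝ) ^ R) x := by
    simpa using (((hasDerivAt_id x).const_mul ((2:ℝ) ^ R)).sub_const (2 * (h:ℝ))).add_const 1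
  have hF : HasDerivAt (fun z => c g * (legP g).eval (2 ^ R * z - 2 * (h : ℝ) + 1))
      (c g * ((derivative (legP g)).eval y * (2:ℝ) ^ R)) x :=
    by have := (((legP g).hasDerivAt y).comp x hinner).const_mul (c g); exact this
  rw [hev.deriv_eq, hF.deriv]
  -- evaluate the derivative polynomial as a sum
  rw [legP_deriv_sum, eval_finset_sum]
  simp only [eval_mul, eval_C]
  -- rewrite each wavelet on the RHS
  have hψ : ∀ j : ℕ, legendreWavelet R h j x = c j * (legP j).eval y := by
    intro j
    rw [legendreWavelet, if_pos ⟨le_of_lt hx₁, le_of_lt hx₂⟩, legendreP_eq]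
  simp only [hψ]
  rw [Finset.mul_sum, Finset.sum_mul, Finset.mul_sum]
  apply Finset.sum_congr rfl
  intro j _
  have key : Real.sqrt (((2 * g + 1 : ℕ) : ℝ) * ((2 * j + 1 : ℕ) : ℝ)) * Real.sqrt ((j:ℝ) + 1/2)
      = Real.sqrt ((g:ℝ) + 1/2) * (2 * (j:ℝ) + 1) := by
    rw [← Real.sqrt_mul (by positivity)]
    rw [show (2 * (j:ℝ) + 1) = Real.sqrt ((2 * (j:ℝ) + 1)^2) from (Real.sqrt_sq (by positivity)).symm]
    rw [← Real.sqrt_mul (by positivity)]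
    congr 1
    push_cast
    ring
  have hcast : ((2 * j + 1 : ℕ) : ℝ) = 2 * (j:ℝ) + 1 := by push_cast; ring
  simp only [hc, hcast] at key ⊢
  linear_combination (-((2:ℝ) ^ ((R:ℝ)/2) * (legP j).eval y * 2 ^ R)) * key
end

section
/- Fix a resolution level R ≥ 1. The Legendre wavelets at level R form an orthonormal family in L²([0,1]): for all integers 1 ≤ h, h′ ≤ 2^{R−1} and all g, g′ ∈ ℕ, ∫₀¹ ψ_{h,g}(x) ψ_{h′,g′}(x) dx = 1 if (h,g) = (h′,g′) and 0 otherwise. -/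
open MeasureTheory

section Aux
open Polynomial intervalIntegral

noncomputable def LP (g : ℕ) : ℝ[X] := (X^2 - 1)^g

lemma iteratedDeriv_polyEval (n : ℕ) (p : ℝ[X]) :
    iteratedDeriv n (fun z : ℝ => p.eval z) = fun y => (derivative^[n] p).eval y := by
  induction n with
  | zero => simp
  | succ n ih =>
      rw [iteratedDeriv_succ, ih, Function.iterate_succ_apply']
      funext y
      exact Polynomial.deriv _

lemma X_sq_sub_one_monic : ((X:ℝ[X])^2 - 1).Monic := by
  simpa using monic_X_pow_sub_C (1:ℝ) (two_ne_zero)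

lemma LP_monic (g : ℕ) : (LP g).Monic := X_sq_sub_one_monic.pow g

lemma LP_natDegree (g : ℕ) : (LP g).natDegree = 2*g := by
  have h1 : ((X:ℝ[X])^2 - 1).natDegree = 2 := by
    simpa using natDegree_X_pow_sub_C (n := 2) (r := (1:ℝ))
  unfold LP
  rw [X_sq_sub_one_monic.natDegree_pow, h1, mul_comm]

-- divisibility of iterated derivative
lemma pow_dvd_derivative {a : ℝ} {m : ℕ} {p : ℝ[X]} (hd : (X - C a)^m ∣ p) :
    (X - C a)^(m-1) ∣ derivative p := by
  obtain ⟨q, rfl⟩ := hd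
  rw [derivative_mul, derivative_pow]
  rcases Nat.eq_zero_or_pos m with hm | hm
  · simp [hm]
  · refine dvd_add ?_ ?_
    · exact ((dvd_mul_left _ _).mul_right _).mul_right _
    · exact (pow_dvd_pow _ (Nat.sub_le _ _)).mul_right _

lemma pow_dvd_iterate_derivative {a : ℝ} {m : ℕ} {p : ℝ[X]} (hd : (X - C a)^m ∣ p) (k : ℕ) :
    (X - C a)^(m-k) ∣ derivative^[k] p := by
  induction k with
  | zero => simpa using hd
  | succ k ih =>
      rw [Function.iterate_succ_apply']
      have := pow_dvd_derivative ih
      simpa [Nat.sub_sub] using this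

lemma LP_factor_one (g : ℕ) : ((X:ℝ[X]) - C 1)^g ∣ LP g := by
  unfold LP
  exact pow_dvd_pow_of_dvd ⟨X + C 1, by simp [C_1]; ring⟩ g

lemma LP_factor_neg_one (g : ℕ) : ((X:ℝ[X]) - C (-1))^g ∣ LP g := by
  unfold LP
  exact pow_dvd_pow_of_dvd ⟨X - C 1, by simp [C_1, map_neg]; ring⟩ g

lemma eval_iterate_derivative_LP {g k : ℕ} (hk : k < g) (y : ℝ) (hy : y = 1 ∨ y = -1) :
    (derivative^[k] (LP g)).eval y = 0 := by
  have hdvd : ((X:ℝ[X]) - C y)^(g-k) ∣ derivative^[k] (LP g) := by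
    rcases hy with rfl | rfl
    · exact pow_dvd_iterate_derivative (LP_factor_one g) k
    · exact pow_dvd_iterate_derivative (LP_factor_neg_one g) k
  obtain ⟨q, hq⟩ := hdvd
  rw [hq]
  have : g - k ≠ 0 := Nat.sub_ne_zero_of_lt hk
  simp [zero_pow this]

lemma poly_intervalIntegrable (p : ℝ[X]) (a b : ℝ) :
    IntervalIntegrable (fun y => p.eval y) volume a b :=
  (p.continuous_aeval).intervalIntegrable a b

lemma poly_ibp (p q : ℝ[X]) (h1 : p.eval 1 = 0) (h2 : p.eval (-1) = 0) :
    ∫ y in (-1:ℝ)..1, (derivative p).eval y * q.eval y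
      = - ∫ y in (-1:ℝ)..1, p.eval y * (derivative q).eval y := by
  have key := intervalIntegral.integral_deriv_mul_eq_sub
    (a := (-1:ℝ)) (b := 1)
    (u := fun y => p.eval y) (v := fun y => q.eval y)
    (u' := fun y => (derivative p).eval y) (v' := fun y => (derivative q).eval y)
    (fun x _ => p.hasDerivAt x) (fun x _ => q.hasDerivAt x)
    (poly_intervalIntegrable _ _ _) (poly_intervalIntegrable _ _ _)
  rw [h1, h2] at key
  have hsplit : ∫ y in (-1:ℝ)..1, ((derivative p).eval y * q.eval y
        + p.eval y * (derivative q).eval y)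
      = (∫ y in (-1:ℝ)..1, (derivative p).eval y * q.eval y)
        + ∫ y in (-1:ℝ)..1, p.eval y * (derivative q).eval y := by
    exact intervalIntegral.integral_add
      (((derivative p).continuous_aeval.mul q.continuous_aeval).intervalIntegrable _ _)
      ((p.continuous_aeval.mul (derivative q).continuous_aeval).intervalIntegrable _ _)
  rw [hsplit] at key
  linarith [key]

lemma poly_step (g : ℕ) (q : ℝ[X]) (k : ℕ) (hk : k ≤ g) :
    ∫ y in (-1:ℝ)..1, (derivative^[g] (LP g)).eval y * q.eval y
      = (-1:ℝ)^k * ∫ y in (-1:ℝ)..1,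
          (derivative^[g-k] (LP g)).eval y * (derivative^[k] q).eval y := by
  induction k with
  | zero => simp
  | succ k ih =>
      have hk' : k ≤ g := Nat.le_of_succ_le hk
      rw [ih hk']
      have hgk : g - k = (g - (k+1)) + 1 := by omega
      have hrw : derivative^[g-k] (LP g) = derivative (derivative^[g-(k+1)] (LP g)) := by
        rw [hgk, Function.iterate_succ_apply']
      have hlt : g - (k+1) < g := by omega
      rw [hrw, poly_ibp _ _ (eval_iterate_derivative_LP hlt 1 (Or.inl rfl))
        (eval_iterate_derivative_LP hlt (-1) (Or.inr rfl))]
      rw [← Function.iterate_succ_apply' derivative k q]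
      ring

lemma iterate_derivative_LP_top (g : ℕ) :
    derivative^[2*g] (LP g) = C ((2*g).factorial : ℝ) := by
  have hdeg : (derivative^[2*g] (LP g)).natDegree = 0 := by
    have h := Polynomial.natDegree_iterate_derivative (LP g) (2*g)
    rw [LP_natDegree] at h
    omega
  have heq := Polynomial.eq_C_of_natDegree_le_zero (le_of_eq hdeg)
  rw [heq]
  congr 1
  have hc := Polynomial.coeff_iterate_derivative (LP g) 0 (k := 2*g)
  rw [hc]
  have hco : (LP g).coeff (2*g) = 1 := by
    have := (LP_monic g).leadingCoeff
    rwa [Polynomial.leadingCoeff, LP_natDegree] at this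
  simp [hco, Nat.descFactorial_self]

lemma derivI (g : ℕ) :
    derivative ((X : ℝ[X]) * (X^2-1)^(g+1))
      = (2*(g:ℝ[X])+3) * (X^2-1)^(g+1) + (2*(g:ℝ[X])+2) * (X^2-1)^g := by
  simp only [derivative_mul, derivative_pow, derivative_X, derivative_one, derivative_sub,
    derivative_X_pow, C_eq_natCast]
  push_cast
  ring

lemma integral_LP (g : ℕ) : ∫ y in (-1:ℝ)..1, (LP g).eval y =
    (-1:ℝ)^g * 2^(2*g+1) * (g.factorial:ℝ)^2 / ((2*g+1).factorial : ℝ) := by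
  induction g with
  | zero => simp [LP]; norm_num
  | succ g ih =>
      have ftc : ∫ y in (-1:ℝ)..1, (derivative ((X : ℝ[X]) * (X^2-1)^(g+1))).eval y
          = ((X : ℝ[X]) * (X^2-1)^(g+1)).eval 1 - ((X : ℝ[X]) * (X^2-1)^(g+1)).eval (-1) :=
        intervalIntegral.integral_eq_sub_of_hasDerivAt
          (fun x _ => Polynomial.hasDerivAt _ x) (poly_intervalIntegrable _ _ _)
      have hb : ((X : ℝ[X]) * (X^2-1)^(g+1)).eval 1 - ((X : ℝ[X]) * (X^2-1)^(g+1)).eval (-1) = 0 := by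
        simp
      rw [hb, derivI] at ftc
      have hsplit : ∫ y in (-1:ℝ)..1, ((2*(g:ℝ[X])+3) * (X^2-1)^(g+1)
            + (2*(g:ℝ[X])+2) * (X^2-1)^g).eval y
          = (2*(g:ℝ)+3) * (∫ y in (-1:ℝ)..1, (LP (g+1)).eval y)
            + (2*(g:ℝ)+2) * ∫ y in (-1:ℝ)..1, (LP g).eval y := by
        simp only [eval_add, eval_mul, eval_pow, eval_sub, eval_one, eval_X, eval_ofNat,
          eval_natCast]
        rw [intervalIntegral.integral_add (f := fun y => (2*(g:ℝ)+3) * (y^2-1)^(g+1))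
          (g := fun y => (2*(g:ℝ)+2) * (y^2-1)^g)
          ((Continuous.mul (by continuity) (by continuity)).intervalIntegrable _ _)
          ((Continuous.mul (by continuity) (by continuity)).intervalIntegrable _ _),
          intervalIntegral.integral_const_mul, intervalIntegral.integral_const_mul]
        simp [LP]
      rw [hsplit] at ftc
      have h3 : (2*(g:ℝ)+3) ≠ 0 := by positivity
      have hfac : ((2*(g+1)+1).factorial : ℝ) = (2*(g:ℝ)+3) * (2*(g:ℝ)+2) * ((2*g+1).factorial : ℝ) := by
        have : 2*(g+1)+1 = (2*g+1) + 1 + 1 := by ring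
        rw [this, Nat.factorial_succ, Nat.factorial_succ]
        push_cast
        ring
      have hI : ∫ y in (-1:ℝ)..1, (LP (g+1)).eval y
          = -(2*(g:ℝ)+2)/(2*(g:ℝ)+3) * ∫ y in (-1:ℝ)..1, (LP g).eval y := by
        field_simp
        linarith [ftc]
      have hgf : ((g+1).factorial : ℝ) = ((g:ℝ)+1) * g.factorial := by
        rw [Nat.factorial_succ]; push_cast; ring
      have h2p : (2:ℝ)^(2*(g+1)+1) = 2^(2*g+1)*4 := by
        rw [show 2*(g+1)+1 = (2*g+1)+2 by ring, pow_add]; norm_num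
      have hfacpos : ((2*g+1).factorial : ℝ) ≠ 0 := by positivity
      rw [hI, ih, hfac, hgf, h2p, pow_succ]
      field_simp
      ring

lemma poly_ortho_ne (g g' : ℕ) (hlt : g' < g) :
    ∫ y in (-1:ℝ)..1, (derivative^[g] (LP g)).eval y * (derivative^[g'] (LP g')).eval y = 0 := by
  rw [poly_step g _ g le_rfl]
  have hz : derivative^[g] (derivative^[g'] (LP g')) = 0 := by
    rw [← Function.iterate_add_apply]
    exact iterate_derivative_eq_zero (by rw [LP_natDegree]; omega)
  rw [hz]
  simp

lemma poly_norm (g : ℕ) :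
    ∫ y in (-1:ℝ)..1, (derivative^[g] (LP g)).eval y * (derivative^[g] (LP g)).eval y
      = 2^(2*g+1) * (g.factorial:ℝ)^2 / (2*(g:ℝ)+1) := by
  rw [poly_step g _ g le_rfl]
  rw [← Function.iterate_add_apply, show g + g = 2*g by ring, iterate_derivative_LP_top,
    Nat.sub_self]
  simp only [Function.iterate_zero_apply, eval_C]
  rw [intervalIntegral.integral_mul_const, integral_LP]
  have hfac : ((2*g+1).factorial : ℝ) = (2*(g:ℝ)+1) * ((2*g).factorial : ℝ) := by
    rw [Nat.factorial_succ]; push_cast; ring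
  have h1 : ((2*g).factorial : ℝ) ≠ 0 := by positivity
  have h2 : (2*(g:ℝ)+1) ≠ 0 := by positivity
  rw [hfac]
  field_simp
  ring_nf
  rw [pow_mul', neg_one_sq, one_pow]

lemma legendreP_eq_s4 (g : ℕ) (y : ℝ) :
    legendreP g y = (1 / ((2:ℝ)^g * g.factorial)) * (derivative^[g] (LP g)).eval y := by
  unfold legendreP
  congr 1
  have hfun : (fun z : ℝ => (z ^ 2 - 1) ^ g) = fun z : ℝ => (LP g).eval z := by
    funext z; simp [LP]
  rw [hfun, iteratedDeriv_polyEval]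

lemma legendre_inner (g g' : ℕ) :
    ∫ y in (-1:ℝ)..1, legendreP g y * legendreP g' y
      = if g = g' then 2/(2*(g:ℝ)+1) else 0 := by
  have hrw : ∀ y : ℝ, legendreP g y * legendreP g' y
      = (1/((2:ℝ)^g * g.factorial) * (1/((2:ℝ)^g' * g'.factorial)))
        * ((derivative^[g] (LP g)).eval y * (derivative^[g'] (LP g')).eval y) := by
    intro y; rw [legendreP_eq_s4, legendreP_eq_s4]; ring
  simp only [hrw]
  rw [intervalIntegral.integral_const_mul]
  by_cases hgg : g = g'
  · subst hgg
    rw [poly_norm, if_pos rfl]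
    have h2 : (2:ℝ)^(2*g+1) = 2^g * 2^g * 2 := by
      rw [show 2*g+1 = g+(g+1) by ring, pow_add, pow_add, pow_one]; ring
    have hf : ((g.factorial : ℝ)) ≠ 0 := by positivity
    have hg1 : (2*(g:ℝ)+1) ≠ 0 := by positivity
    rw [h2]
    field_simp

  · rw [if_neg hgg]
    rcases Nat.lt_or_ge g' g with hlt | hge
    · rw [poly_ortho_ne g g' hlt, mul_zero]
    · have hlt' : g < g' := lt_of_le_of_ne hge hgg
      have hsym : ∫ y in (-1:ℝ)..1,
          (derivative^[g] (LP g)).eval y * (derivative^[g'] (LP g')).eval y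
          = ∫ y in (-1:ℝ)..1,
          (derivative^[g'] (LP g')).eval y * (derivative^[g] (LP g)).eval y := by
        congr 1; funext y; ring
      rw [hsym, poly_ortho_ne g' g hlt', mul_zero]

lemma legendre_ortho (g g' : ℕ) :
    ∫ y in (-1:ℝ)..1, (Real.sqrt ((g:ℝ)+1/2) * legendreP g y)
        * (Real.sqrt ((g':ℝ)+1/2) * legendreP g' y) = if g = g' then 1 else 0 := by
  have hrw : ∀ y : ℝ, (Real.sqrt ((g:ℝ)+1/2) * legendreP g y)
        * (Real.sqrt ((g':ℝ)+1/2) * legendreP g' y)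
      = (Real.sqrt ((g:ℝ)+1/2) * Real.sqrt ((g':ℝ)+1/2))
        * (legendreP g y * legendreP g' y) := by
    intro y; ring
  simp only [hrw]
  rw [intervalIntegral.integral_const_mul, legendre_inner]
  by_cases hgg : g = g'
  · subst hgg
    rw [if_pos rfl, if_pos rfl]
    rw [Real.mul_self_sqrt (by positivity : (0:ℝ) ≤ (g:ℝ)+1/2)]
    have : (2*(g:ℝ)+1) ≠ 0 := by positivity
    field_simp
  · rw [if_neg hgg, if_neg hgg, mul_zero]


lemma wavelet_disjoint (R h h' g g' : ℕ) (hlt : h < h') :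
    ∫ x in (0:ℝ)..1, legendreWavelet R h g x * legendreWavelet R h' g' x = 0 := by
  set b := (h:ℝ)/2^(R-1) with hb
  set a' := ((h':ℝ)-1)/2^(R-1) with ha'
  have hpow : (0:ℝ) < 2^(R-1) := by positivity
  have hba : b ≤ a' := by
    rw [hb, ha']
    gcongr
    have : (h:ℝ) + 1 ≤ (h':ℝ) := by exact_mod_cast hlt
    linarith
  have hnull : volume {x : ℝ | legendreWavelet R h g x * legendreWavelet R h' g' x ≠ 0} = 0 := by
    have hsub : {x : ℝ | legendreWavelet R h g x * legendreWavelet R h' g' x ≠ 0}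
        ⊆ Set.Icc a' b := by
      intro x hx
      simp only [Set.mem_setOf_eq, legendreWavelet] at hx
      by_cases h1 : ((h : ℝ) - 1) / 2 ^ (R - 1) ≤ x ∧ x ≤ (h : ℝ) / 2 ^ (R - 1)
      · by_cases h2 : ((h' : ℝ) - 1) / 2 ^ (R - 1) ≤ x ∧ x ≤ (h' : ℝ) / 2 ^ (R - 1)
        · exact ⟨h2.1, h1.2⟩
        · rw [if_neg h2, mul_zero] at hx; exact absurd rfl hx
      · rw [if_neg h1, zero_mul] at hx; exact absurd rfl hx
    refine measure_mono_null hsub ?_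
    rw [Real.volume_Icc]
    simp only [ENNReal.ofReal_eq_zero]
    linarith
  have hae : ∀ᵐ x ∂(volume : Measure ℝ), x ∈ Set.uIoc (0:ℝ) 1 →
      legendreWavelet R h g x * legendreWavelet R h' g' x = 0 := by
    filter_upwards [(MeasureTheory.ae_iff).2 hnull] with x hx _
    simpa using hx
  rw [intervalIntegral.integral_congr_ae hae]
  simp

lemma wavelet_same (R h g g' : ℕ) (hR : 1 ≤ R) (hh1 : 1 ≤ h) (hh2 : h ≤ 2^(R-1)) :
    ∫ x in (0:ℝ)..1, legendreWavelet R h g x * legendreWavelet R h g' x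
      = if g = g' then 1 else 0 := by
  set a : ℝ := ((h:ℝ)-1)/2^(R-1) with ha
  set b : ℝ := (h:ℝ)/2^(R-1) with hb
  have hpow : (0:ℝ) < 2^(R-1) := by positivity
  have hh1' : (1:ℝ) ≤ (h:ℝ) := by exact_mod_cast hh1
  have hh2' : (h:ℝ) ≤ 2^(R-1) := by
    have h2 : ((h:ℕ):ℝ) ≤ ((2^(R-1):ℕ):ℝ) := by exact_mod_cast hh2
    simpa [Nat.cast_pow] using h2
  have h0a : 0 ≤ a := by rw [ha]; exact div_nonneg (by linarith) hpow.le
  have hb1 : b ≤ 1 := by rw [hb]; exact (div_le_one hpow).2 hh2'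
  have hab : a < b := by
    rw [ha, hb]
    exact div_lt_div_of_pos_right (by linarith) hpow
  set E : ℝ → ℝ := fun x =>
    ((2:ℝ)^((R:ℝ)/2) * Real.sqrt ((g:ℝ)+1/2) * legendreP g (2^R*x - 2*(h:ℝ)+1))
      * ((2:ℝ)^((R:ℝ)/2) * Real.sqrt ((g':ℝ)+1/2) * legendreP g' (2^R*x - 2*(h:ℝ)+1))
    with hE
  have hfun : ∀ x : ℝ, legendreWavelet R h g x * legendreWavelet R h g' x
      = (Set.Icc a b).indicator E x := by
    intro x
    unfold legendreWavelet
    by_cases hx : a ≤ x ∧ x ≤ b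
    · rw [if_pos hx, if_pos hx, Set.indicator_of_mem (Set.mem_Icc.2 hx)]
    · rw [if_neg hx, zero_mul, Set.indicator_of_notMem (by rwa [Set.mem_Icc])]
  simp only [hfun]
  rw [intervalIntegral.integral_of_le (zero_le_one), MeasureTheory.setIntegral_indicator
    measurableSet_Icc]
  have hsetae : (Set.Ioc (0:ℝ) 1 ∩ Set.Icc a b : Set ℝ) =ᵐ[volume] Set.Ioc a b := by
    rw [MeasureTheory.ae_eq_set]
    constructor
    · refine measure_mono_null (fun x hx => ?_) (measure_singleton a)
      obtain ⟨⟨hx0, hx1⟩, hxa, hxb⟩ := hx.1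
      have : ¬ (a < x ∧ x ≤ b) := hx.2
      have hxa' : ¬ a < x := fun hc => this ⟨hc, hxb⟩
      have : x = a := le_antisymm (not_lt.1 hxa') hxa
      simpa [this]
    · refine measure_mono_null (fun x hx => ?_) (measure_empty)
      obtain ⟨⟨hxa, hxb⟩, hns⟩ := hx
      exact absurd ⟨⟨lt_of_le_of_lt h0a hxa, le_trans hxb hb1⟩, ⟨hxa.le, hxb⟩⟩ hns
  rw [MeasureTheory.setIntegral_congr_set hsetae,
    ← intervalIntegral.integral_of_le hab.le]
  set c : ℝ := (2:ℝ)^R with hc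
  have hcpos : (0:ℝ) < c := by positivity
  have hcc : (2:ℝ)^((R:ℝ)/2) * (2:ℝ)^((R:ℝ)/2) = c := by
    rw [← Real.rpow_add two_pos, add_halves, Real.rpow_natCast]
  set F : ℝ → ℝ := fun y =>
    (Real.sqrt ((g:ℝ)+1/2) * legendreP g y) * (Real.sqrt ((g':ℝ)+1/2) * legendreP g' y) with hF
  have hEF : ∀ x : ℝ, E x = c * F (c*x + (1-2*(h:ℝ))) := by
    intro x
    rw [hE, hF]
    rw [show c*x + (1-2*(h:ℝ)) = c*x - 2*(h:ℝ)+1 from by ring, ← hcc]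
    ring
  simp only [hEF]
  rw [intervalIntegral.integral_const_mul,
    intervalIntegral.integral_comp_mul_add F (ne_of_gt hcpos) (1-2*(h:ℝ))]
  have h2R : c = 2 * 2^(R-1) := by
    rw [hc, ← pow_succ']
    congr 1
    omega
  have hca : c * a + (1-2*(h:ℝ)) = -1 := by
    rw [h2R, ha]
    field_simp
    ring
  have hcb : c * b + (1-2*(h:ℝ)) = 1 := by
    rw [h2R, hb]
    field_simp
    ring
  rw [hca, hcb, smul_eq_mul, ← mul_assoc, mul_inv_cancel₀ (ne_of_gt hcpos), one_mul]
  exact legendre_ortho g g'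

end Aux

/-- Orthonormality of the Legendre wavelets at resolution level `R` in `L²([0,1])`:
`∫₀¹ ψ_{h,g} ψ_{h′,g′} = δ_{(h,g),(h′,g′)}`. -/
theorem legendreWavelet_orthonormal (R : ℕ) (hR : 1 ≤ R) (h h' g g' : ℕ)
    (hh₁ : 1 ≤ h) (hh₂ : h ≤ 2 ^ (R - 1)) (hh'₁ : 1 ≤ h') (hh'₂ : h' ≤ 2 ^ (R - 1)) :
    ∫ x in (0 : ℝ)..1, legendreWavelet R h g x * legendreWavelet R h' g' x =
      if (h, g) = (h', g') then 1 else 0 := by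
  by_cases hhh : h = h'
  · subst hhh
    rw [wavelet_same R h g g' hR hh₁ hh₂]
    by_cases hgg : g = g' <;> simp [hgg]
  · rw [if_neg (by simp [hhh])]
    rcases Nat.lt_or_ge h h' with hlt | hge
    · exact wavelet_disjoint R h h' g g' hlt
    · have hlt : h' < h := lt_of_le_of_ne hge (fun he => hhh he.symm)
      have hsym : ∫ x in (0:ℝ)..1, legendreWavelet R h g x * legendreWavelet R h' g' x
          = ∫ x in (0:ℝ)..1, legendreWavelet R h' g' x * legendreWavelet R h g x :=
        intervalIntegral.integral_congr (fun x _ => mul_comm _ _)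
      rw [hsym]
      exact wavelet_disjoint R h' h g' g hlt
end
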